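/- Suppose X ⊆ Z contains Q_Z, and F : X → ℕ^ℕ is a function (X with the subspace topology) that is continuous at every point of Q_Z. Then there exists g : ℕ → ℕ such that for every x ∈ X and every n ∈ ℕ, if x(n) > g(n) (i.e. the element x(n) of ℕ∞ is strictly greater than g(n), in particular if x(n) = ∞), then F(x)(n) ≤ g(n). -/

import Mathlib

open Filter Set Topology

/-- The set `Z ⊆ (ℕ∞)^ℕ` of monotone sequences that are strictly increasing
while finite. -/
def ZSet : Set (ℕ → ℕ∞) :=
  {f | ∀ n, f n ≤ f (n + 1) ∧ (f n < ⊤ → f n < f (n + 1))}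

/-- For a finite sequence `s`, the element `q_s` of `(ℕ∞)^ℕ` extending `s` by `∞`. -/
def qSeq (s : List ℕ) : ℕ → ℕ∞ :=
  fun k => if h : k < s.length then (s.get ⟨k, h⟩ : ℕ∞) else ⊤

/-- The countable dense subset `Q_Z = {q_s : s finite strictly increasing}` of `Z`. -/
def QZ : Set (ℕ → ℕ∞) :=
  {f | ∃ s : List ℕ, List.Pairwise (· < ·) s ∧ f = qSeq s}

lemma ZSet.mono {x : ℕ → ℕ∞} (hx : x ∈ ZSet) : Monotone x :=
  monotone_nat_of_le_succ fun n => (hx n).1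

lemma ZSet.lt {x : ℕ → ℕ∞} (hx : x ∈ ZSet) {i j : ℕ} (hij : i < j) (hi : x i ≠ ⊤) :
    x i < x j := by
  induction j, hij using Nat.le_induction with
  | base => exact (hx i).2 hi.lt_top
  | succ j hj ih => exact lt_of_lt_of_le ih (hx j).1

lemma sorted_sublist_range {s : List ℕ} (hs : s.Pairwise (· < ·)) {m : ℕ}
    (h : ∀ a ∈ s, a < m) : s.Sublist (List.range m) := by
  classical
  have hnods : s.Nodup := hs.nodup
  have hfil : ((List.range m).filter (fun a => a ∈ s)).Sublist (List.range m) :=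
    List.filter_sublist
  have hsortfil : ((List.range m).filter (fun a => a ∈ s)).Pairwise (· < ·) :=
    (List.pairwise_lt_range (n := m)).sublist hfil
  have hnodfil : ((List.range m).filter (fun a => a ∈ s)).Nodup := hsortfil.nodup
  have hmem : ∀ a : ℕ, a ∈ (List.range m).filter (fun a => a ∈ s) ↔ a ∈ s := by
    intro a
    simp only [List.mem_filter, List.mem_range, decide_eq_true_eq]
    exact ⟨fun h' => h'.2, fun h' => ⟨h a h', h'⟩⟩
  haveI : Std.Antisymm (α := ℕ) (· < ·) := ⟨fun a b h1 h2 => absurd h2 (lt_asymm h1)⟩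
  have hperm : List.Perm s ((List.range m).filter (fun a => a ∈ s)) :=
    (List.perm_ext_iff_of_nodup hnods hnodfil).2 (fun a => (hmem a).symm)
  have : s = (List.range m).filter (fun a => a ∈ s) :=
    List.Perm.eq_of_pairwise' hs hsortfil hperm
  rw [this]; exact hfil

/-- Iterated bound: `iterBound h (j+1)` dominates `h s` for all strictly sorted `s`
with entries `≤ iterBound h j`. -/
def iterBound (h : List ℕ → ℕ) : ℕ → ℕ
  | 0 => 0
  | j + 1 => iterBound h j + 1 + ((List.range (iterBound h j + 1)).sublists.map h).sum

lemma iterBound_mono (h : List ℕ → ℕ) : Monotone (iterBound h) :=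
  monotone_nat_of_le_succ fun j => by simp [iterBound]; omega

lemma le_iterBound_succ (h : List ℕ → ℕ) {s : List ℕ} (hs : s.Pairwise (· < ·)) {j : ℕ}
    (hle : ∀ a ∈ s, a ≤ iterBound h j) : h s ≤ iterBound h (j + 1) := by
  have hsub : s.Sublist (List.range (iterBound h j + 1)) :=
    sorted_sublist_range hs (fun a ha => Nat.lt_succ_of_le (hle a ha))
  have hmem : h s ∈ (List.range (iterBound h j + 1)).sublists.map h :=
    List.mem_map_of_mem (List.mem_sublists.2 hsub)
  have := List.single_le_sum (l := (List.range (iterBound h j + 1)).sublists.map h)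
    (fun x _ => Nat.zero_le x) _ hmem
  simp only [iterBound]
  omega

theorem stmt3 (X : Set (ℕ → ℕ∞)) (hXZ : X ⊆ ZSet) (hQX : QZ ⊆ X)
    (F : X → (ℕ → ℕ)) (hF : ∀ q : X, (q : ℕ → ℕ∞) ∈ QZ → ContinuousAt F q) :
    ∃ g : ℕ → ℕ, ∀ x : X, ∀ n : ℕ, (g n : ℕ∞) < (x : ℕ → ℕ∞) n → F x n ≤ g n := by
  classical
  -- Step 1: continuity bounds at each q_s
  have key : ∀ (s : List ℕ) (n : ℕ), ∃ C : ℕ, ∀ (x : ℕ → ℕ∞) (hx : x ∈ X),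
      s.Pairwise (· < ·) → (∀ i (h : i < s.length), x i = (s.get ⟨i, h⟩ : ℕ∞)) →
      ((C : ℕ∞) < x s.length) → F ⟨x, hx⟩ n ≤ C := by
    intro s n
    by_cases hs : s.Pairwise (· < ·)
    swap
    · exact ⟨0, fun x hx h => absurd h hs⟩
    have hqX : qSeq s ∈ X := hQX ⟨s, hs, rfl⟩
    set q : X := ⟨qSeq s, hqX⟩ with hq
    have hcont := hF q ⟨s, hs, rfl⟩
    have h1 : {z : X | F z n = F q n} ∈ 𝓝 q := by
      have hopen : IsOpen {y : ℕ → ℕ | y n = F q n} := by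
        have he : {y : ℕ → ℕ | y n = F q n} = (fun y : ℕ → ℕ => y n) ⁻¹' {F q n} := rfl
        rw [he]
        exact (isOpen_discrete _).preimage (continuous_apply n)
      exact hcont (hopen.mem_nhds rfl)
    rw [nhds_subtype_eq_comap] at h1
    obtain ⟨U, hU, hUsub⟩ := h1
    rw [nhds_pi, Filter.mem_pi] at hU
    obtain ⟨I, hIfin, V, hV, hVU⟩ := hU
    have hVtop : ∀ i, s.length ≤ i → ∃ a : ℕ, Ioi (a : ℕ∞) ⊆ V i := by
      intro i hsi
      have hqi : qSeq s i = ⊤ := by simp [qSeq, Nat.not_lt.2 hsi]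
      have hVi := hV i
      rw [hqi] at hVi
      obtain ⟨a, ha, hsub⟩ := nhds_top_basis.mem_iff.1 hVi
      refine ⟨a.toNat, ?_⟩
      rwa [ENat.coe_toNat ha.ne]
    choose! a ha using hVtop
    set N : ℕ := hIfin.toFinset.sup a with hN
    refine ⟨max N (F q n), fun x hx _ hagree hbig => ?_⟩
    have hmono : Monotone x := ZSet.mono (hXZ hx)
    have hxU : x ∈ U := by
      apply hVU
      intro i hi
      rcases lt_or_ge i s.length with h | h
      · have hqi : qSeq s i ∈ V i := mem_of_mem_nhds (hV i)
        rw [hagree i h]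
        simpa [qSeq, h] using hqi
      · apply ha i h
        have h1 : (a i : ℕ∞) ≤ (N : ℕ∞) := by
          exact_mod_cast Finset.le_sup (hIfin.mem_toFinset.2 hi)
        have h2 : (N : ℕ∞) ≤ (max N (F q n) : ℕ∞) := by exact_mod_cast le_max_left _ _
        exact lt_of_le_of_lt (h1.trans h2) (lt_of_lt_of_le hbig (hmono h))
    have heq : F ⟨x, hx⟩ n = F q n := hUsub hxU
    rw [heq]
    exact le_max_right _ _
  choose C hC using key
  refine ⟨fun n => iterBound (fun s => C s n) (n + 1), ?_⟩
  rintro ⟨x, hx⟩ n hbig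
  set B : ℕ → ℕ := iterBound (fun s => C s n) with hB
  simp only at hbig
  have hP : ∃ k, (B (k + 1) : ℕ∞) < x k := ⟨n, hbig⟩
  set k := Nat.find hP with hkdef
  have hk : (B (k + 1) : ℕ∞) < x k := Nat.find_spec hP
  have hkn : k ≤ n := Nat.find_le hbig
  have hsmall : ∀ i, i < k → x i ≤ (B k : ℕ∞) := by
    intro i hik
    have := Nat.find_min hP hik
    push_neg at this
    exact this.trans (by exact_mod_cast iterBound_mono _ hik)
  have hnetop : ∀ i, i < k → x i ≠ ⊤ := fun i hik =>
    ne_top_of_le_ne_top (by simp) (hsmall i hik)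
  set f : Fin k → ℕ := fun i => (x i).toNat with hf
  set s : List ℕ := List.ofFn f with hsdef
  have hsorted : s.Pairwise (· < ·) := by
    rw [hsdef, List.pairwise_ofFn]
    intro i j hij
    have h1 : x i < x j := ZSet.lt (hXZ hx) hij (hnetop i i.isLt)
    have : ((f i : ℕ∞)) < ((f j : ℕ∞)) := by
      rwa [hf, ENat.coe_toNat (hnetop i i.isLt), ENat.coe_toNat (hnetop j j.isLt)]
    exact_mod_cast this
  have hlen : s.length = k := by simp [hsdef]
  have hagree : ∀ i (h : i < s.length), x i = (s.get ⟨i, h⟩ : ℕ∞) := by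
    intro i h
    have hik : i < k := hlen ▸ h
    rw [List.get_ofFn]
    exact (ENat.coe_toNat (hnetop i hik)).symm
  have hentries : ∀ a ∈ s, a ≤ B k := by
    intro b hb
    rw [hsdef, List.mem_ofFn] at hb
    obtain ⟨i, rfl⟩ := hb
    have := hsmall i i.isLt
    have := ENat.toNat_le_toNat this (by simp)
    simpa [hf] using this
  have hCs : C s n ≤ B (k + 1) := le_iterBound_succ _ hsorted hentries
  have hbig2 : ((C s n : ℕ∞)) < x s.length := by
    rw [hlen]
    exact lt_of_le_of_lt (by exact_mod_cast hCs) hk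
  have := hC s n x hx hsorted hagree hbig2
  exact this.trans (hCs.trans (iterBound_mono _ (Nat.succ_le_succ hkn)))
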